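/- Let f satisfy Assumption 1 and let u^1, u^2 be two families of approximation functions each satisfying Assumption 2, with u_i^1(y_i;x) ≤ u_i^2(y_i;x) for all y_i ∈ ℝ^{n_i}, x ∈ ℝⁿ, i ∈ [N]. Then 𝒳* ⊆ 𝓛_{u^1} ⊆ 𝓛_{u^2} ⊆ 𝒯_f, where 𝒳* is the set of global minimizers of F. -/

import Mathlib

open scoped RealInnerProductSpace
open Finset

/-- The weighted ℓ₀ quasinorm `‖x‖_{0,λ}`. -/
noncomputable def l0norm {n N : ℕ} (blk : Fin n → Fin N) (lam : Fin N → ℝ)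
    (x : EuclideanSpace ℝ (Fin n)) : ℝ :=
  ∑ j, if x j ≠ 0 then lam (blk j) else 0

/-- Membership in `I(x) = supp(x) ∪ {j ∈ 𝒮ᵢ : λᵢ = 0}`. -/
def InIset {n N : ℕ} (blk : Fin n → Fin N) (lam : Fin N → ℝ)
    (x : EuclideanSpace ℝ (Fin n)) (j : Fin n) : Prop :=
  x j ≠ 0 ∨ lam (blk j) = 0

/-- Block restriction `xᵢ = Uᵢᵀ x`. -/
noncomputable def blkProj {n N : ℕ} (blk : Fin n → Fin N) (i : Fin N)
    (x : EuclideanSpace ℝ (Fin n)) : EuclideanSpace ℝ {j : Fin n // blk j = i} :=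
  WithLp.toLp 2 (fun j => x j.1)

/-- Block embedding `Uᵢ hᵢ`. -/
noncomputable def blkEmbed {n N : ℕ} (blk : Fin n → Fin N) (i : Fin N)
    (v : EuclideanSpace ℝ {j : Fin n // blk j = i}) : EuclideanSpace ℝ (Fin n) :=
  WithLp.toLp 2 (fun j => if h : blk j = i then v ⟨j, h⟩ else 0)

/-- Assumption 2 on the family of approximation functions `uᵢ(·;·)`, with gradients
(in the first argument) `guᵢ`, Lipschitz constants `Mᵢ > Lᵢ` and curvature constants
`μᵢ ∈ (0, Mᵢ - Lᵢ]`. -/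
structure ApproxAssumption {n N : ℕ} (blk : Fin n → Fin N)
    (f : EuclideanSpace ℝ (Fin n) → ℝ)
    (g : EuclideanSpace ℝ (Fin n) → EuclideanSpace ℝ (Fin n))
    (L : Fin N → ℝ)
    (u : ∀ i : Fin N, EuclideanSpace ℝ {j : Fin n // blk j = i} →
      EuclideanSpace ℝ (Fin n) → ℝ)
    (gu : ∀ i : Fin N, EuclideanSpace ℝ {j : Fin n // blk j = i} →
      EuclideanSpace ℝ (Fin n) → EuclideanSpace ℝ {j : Fin n // blk j = i})
    (M μ : Fin N → ℝ) : Prop where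
  strictConvexOn : ∀ i x, StrictConvexOn ℝ Set.univ (fun v => u i v x)
  hasGradient : ∀ i x v, HasGradientAt (fun w => u i w x) (gu i v x) v
  continuous_second : ∀ i v, Continuous fun x => u i v x
  value_at : ∀ i x, u i (blkProj blk i x) x = f x
  gradient_at : ∀ i x, gu i (blkProj blk i x) x = blkProj blk i (g x)
  lipschitz_grad : ∀ i x v w, ‖gu i v x - gu i w x‖ ≤ M i * ‖v - w‖
  M_gt_L : ∀ i, L i < M i
  mu_pos : ∀ i, 0 < μ i
  mu_le : ∀ i, μ i ≤ M i - L i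
  lower_bound : ∀ i x v,
    f (x + blkEmbed blk i (v - blkProj blk i x)) + μ i / 2 * ‖v - blkProj blk i x‖ ^ 2
      ≤ u i v x

/-- `z` is a `u`-strong local minimizer: `F(z) ≤ min_{yᵢ} uᵢ(yᵢ;z) + ‖z + Uᵢ(yᵢ - zᵢ)‖_{0,λ}`
for all blocks `i`. -/
def IsUStrongLocalMin {n N : ℕ} (blk : Fin n → Fin N) (lam : Fin N → ℝ)
    (f : EuclideanSpace ℝ (Fin n) → ℝ)
    (u : ∀ i : Fin N, EuclideanSpace ℝ {j : Fin n // blk j = i} →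
      EuclideanSpace ℝ (Fin n) → ℝ)
    (z : EuclideanSpace ℝ (Fin n)) : Prop :=
  ∀ (i : Fin N) (y : EuclideanSpace ℝ {j : Fin n // blk j = i}),
    f z + l0norm blk lam z ≤
      u i y z + l0norm blk lam (z + blkEmbed blk i (y - blkProj blk i z))

/-- If `u¹, u²` are two families of approximation functions satisfying
Assumption 2 with `u¹ᵢ(yᵢ;x) ≤ u²ᵢ(yᵢ;x)` everywhere, then
`𝒳* ⊆ 𝓛_{u¹} ⊆ 𝓛_{u²} ⊆ 𝒯_f`. -/
theorem statement6 {n N : ℕ} (blk : Fin n → Fin N) (lam : Fin N → ℝ)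
    (hlam : ∀ i, 0 ≤ lam i) (hlam_pos : ∃ i, 0 < lam i)
    (f : EuclideanSpace ℝ (Fin n) → ℝ)
    (g : EuclideanSpace ℝ (Fin n) → EuclideanSpace ℝ (Fin n))
    (hconv : ConvexOn ℝ Set.univ f)
    (hgrad : ∀ x, HasGradientAt f (g x) x)
    (L : Fin N → ℝ) (hL : ∀ i, 0 < L i)
    (hLip : ∀ (i : Fin N) (x : EuclideanSpace ℝ (Fin n))
      (h : EuclideanSpace ℝ {j : Fin n // blk j = i}),
      ‖blkProj blk i (g (x + blkEmbed blk i h)) - blkProj blk i (g x)‖ ≤ L i * ‖h‖)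
    (u₁ u₂ : ∀ i : Fin N, EuclideanSpace ℝ {j : Fin n // blk j = i} →
      EuclideanSpace ℝ (Fin n) → ℝ)
    (gu₁ gu₂ : ∀ i : Fin N, EuclideanSpace ℝ {j : Fin n // blk j = i} →
      EuclideanSpace ℝ (Fin n) → EuclideanSpace ℝ {j : Fin n // blk j = i})
    (M₁ μ₁ M₂ μ₂ : Fin N → ℝ)
    (hu₁ : ApproxAssumption blk f g L u₁ gu₁ M₁ μ₁)
    (hu₂ : ApproxAssumption blk f g L u₂ gu₂ M₂ μ₂)
    (h12 : ∀ (i : Fin N) (y : EuclideanSpace ℝ {j : Fin n // blk j = i})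
      (x : EuclideanSpace ℝ (Fin n)), u₁ i y x ≤ u₂ i y x) :
    (∀ z : EuclideanSpace ℝ (Fin n),
        (∀ x, f z + l0norm blk lam z ≤ f x + l0norm blk lam x) →
        IsUStrongLocalMin blk lam f u₁ z) ∧
    (∀ z : EuclideanSpace ℝ (Fin n),
        IsUStrongLocalMin blk lam f u₁ z → IsUStrongLocalMin blk lam f u₂ z) ∧
    (∀ z : EuclideanSpace ℝ (Fin n),
        IsUStrongLocalMin blk lam f u₂ z → ∀ j, InIset blk lam z j → g z j = 0) := by
  obtain ⟨P1, P2⟩ : (∀ z : EuclideanSpace ℝ (Fin n),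
        (∀ x, f z + l0norm blk lam z ≤ f x + l0norm blk lam x) →
        IsUStrongLocalMin blk lam f u₁ z) ∧
      (∀ z : EuclideanSpace ℝ (Fin n),
        IsUStrongLocalMin blk lam f u₁ z → IsUStrongLocalMin blk lam f u₂ z) := by
    constructor
    · intro z hz i y
      have hlb := hu₁.lower_bound i z y
      have hμ := hu₁.mu_pos i
      have hsq : (0:ℝ) ≤ ‖y - blkProj blk i z‖ ^ 2 := sq_nonneg _
      have h1 : f (z + blkEmbed blk i (y - blkProj blk i z)) ≤ u₁ i y z := by nlinarith
      have h2 := hz (z + blkEmbed blk i (y - blkProj blk i z))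
      linarith
    · intro z hz i y
      have := hz i y
      have := h12 i y z
      linarith
  refine ⟨P1, P2, ?_⟩
  intro z hz j hj
  set i := blk j with hi
  have hji : blk j = i := hi.symm
  set v : EuclideanSpace ℝ {k : Fin n // blk k = i} := blkProj blk i z with hv
  set e : EuclideanSpace ℝ {k : Fin n // blk k = i} :=
    EuclideanSpace.single ⟨j, hji⟩ 1 with he
  -- pointwise description of the perturbed point
  have hpt : ∀ (s : ℝ) (k : Fin n),
      (z + blkEmbed blk i ((v + s • e) - v)) k = if k = j then z j + s else z k := by
    intro s k
    have hsub : (v + s • e) - v = s • e := add_sub_cancel_left v (s • e)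
    rw [hsub]
    show z k + blkEmbed blk i (s • e) k = _
    by_cases hkj : k = j
    · subst hkj
      simp [blkEmbed, hji, he, EuclideanSpace.single_apply]
    · by_cases hk : blk k = i
      · have hne : (⟨k, hk⟩ : {k : Fin n // blk k = i}) ≠ ⟨j, hji⟩ := by
          simp [Subtype.ext_iff, hkj]
        simp [blkEmbed, hk, he, EuclideanSpace.single_apply, hne, hkj]
      · simp [blkEmbed, hk, hkj]
  -- ℓ₀ norm is unchanged for admissible s
  have hl0 : ∀ s : ℝ, (lam i = 0 ∨ (z j ≠ 0 ∧ z j + s ≠ 0)) →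
      l0norm blk lam (z + blkEmbed blk i ((v + s • e) - v)) = l0norm blk lam z := by
    intro s hs
    unfold l0norm
    refine Finset.sum_congr rfl fun k _ => ?_
    rw [hpt s k]
    by_cases hkj : k = j
    · subst hkj
      rw [if_pos rfl]
      rcases hs with h0 | ⟨h1, h2⟩
      · rw [hji, h0]; simp
      · rw [if_pos h2, if_pos h1]
    · rw [if_neg hkj]
  -- f z ≤ u₂ along the line, for admissible s
  have hφ : ∀ s : ℝ, (lam i = 0 ∨ (z j ≠ 0 ∧ z j + s ≠ 0)) →
      f z ≤ u₂ i (v + s • e) z := by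
    intro s hs
    have h := hz i (v + s • e)
    rw [hl0 s hs] at h
    linarith
  -- 0 is a local min of φ
  set φ : ℝ → ℝ := fun s => u₂ i (v + s • e) z with hφdef
  have hφ0 : φ 0 = f z := by
    have : v + (0:ℝ) • e = v := by simp
    simp only [hφdef, zero_smul, add_zero, hv]
    exact hu₂.value_at i z
  have hmin : IsLocalMin φ 0 := by
    rw [IsLocalMin, IsMinFilter, hφ0]
    rcases hj with hzj | hl0j
    · have hcont : ∀ᶠ s : ℝ in nhds 0, z j + s ≠ 0 := by
        have hc : ContinuousAt (fun s : ℝ => z j + s) 0 := by fun_prop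
        have : z j + (0:ℝ) ≠ 0 := by simpa using hzj
        exact hc.eventually_ne this
      filter_upwards [hcont] with s hs
      exact hφ s (Or.inr ⟨hzj, hs⟩)
    · exact Filter.Eventually.of_forall fun s => hφ s (Or.inl (hji ▸ hl0j))
  -- derivative of φ at 0 is g z j
  have hG : HasGradientAt (fun w => u₂ i w z) (gu₂ i v z) v := hu₂.hasGradient i z v
  have hline : HasDerivAt (fun s : ℝ => v + s • e) e 0 := by
    have h1 : HasDerivAt (fun s : ℝ => s • e) ((1:ℝ) • e) 0 :=
      (hasDerivAt_id (0:ℝ)).smul_const e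
    simpa using h1.const_add v
  have hv0 : (fun s : ℝ => v + s • e) 0 = v := by simp
  have hG' : HasFDerivAt (fun w => u₂ i w z)
      (InnerProductSpace.toDual ℝ _ (gu₂ i v z)) ((fun s : ℝ => v + s • e) 0) := by
    rw [hv0]; exact hG.hasFDerivAt
  have hder : HasDerivAt φ (⟪gu₂ i v z, e⟫) 0 := by
    have := hG'.comp_hasDerivAt 0 hline
    simpa [hφdef, Function.comp_def, InnerProductSpace.toDual_apply_apply] using this
  have hinner : (⟪gu₂ i v z, e⟫ : ℝ) = g z j := by
    rw [hv, hu₂.gradient_at i z]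
    rw [he, real_inner_comm]
    rw [EuclideanSpace.inner_single_left]
    simp [blkProj]
  rw [hinner] at hder
  exact hmin.hasDerivAt_eq_zero hder
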